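/- Let R ⊆ ℝ² be a closed rectangle with side lengths m and n, where m ≤ n, and let a be a point of R. Then there exists a polygonal path (a finite concatenation of straight segments) starting and ending at a such that every point of R is at distance at most 1 from some point of the path, and the total length of the path is at most 5n·max(m,2). -/

import Mathlib

open Real

noncomputable section

/-- Points of the Euclidean plane. -/
abbrev Pt := EuclideanSpace ℝ (Fin 2)

/-- The length of the polygonal path with consecutive vertices `v 0, v 1, …, v N`:
the sum of the lengths of its segments. -/
def polyLength {N : ℕ} (v : Fin (N + 1) → Pt) : ℝ :=
  ∑ i : Fin N, dist (v i.castSucc) (v i.succ)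

/-- The set of points of the polygonal path with consecutive vertices `v 0, …, v N`. -/
def polySet {N : ℕ} (v : Fin (N + 1) → Pt) : Set Pt :=
  ⋃ i : Fin N, segment ℝ (v i.castSucc) (v i.succ)

/-- `R` is a closed rectangle with side lengths `m` and `n` (in arbitrary position). -/
def IsRectangle (R : Set Pt) (m n : ℝ) : Prop :=
  ∃ x u w : Pt, ‖u‖ = 1 ∧ ‖w‖ = 1 ∧ (inner ℝ u w : ℝ) = 0 ∧
    R = {y | ∃ s t : ℝ, s ∈ Set.Icc 0 m ∧ t ∈ Set.Icc 0 n ∧ y = x + s • u + t • w}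

/-- Scan-line abscissae. -/
def sigma' (m : ℝ) (i : ℕ) : ℝ := min (2*i+1) m

/-- Alternating ordinates. -/
def eps' (n : ℝ) (i : ℕ) : ℝ := if Even i then 0 else n

/-- The interior vertices of the boustrophedon scan path. -/
def qv (x u w : Pt) (m n : ℝ) (j : ℕ) : Pt :=
  x + sigma' m (j/2) • u + eps' n ((j+1)/2) • w

/-- The full vertex list: start and end at `a`, with the scan vertices in between. -/
def vtx (x u w : Pt) (m n : ℝ) (k : ℕ) (a : Pt) (j : Fin (2*k+1+1)) : Pt :=
  if j.val = 0 ∨ j.val = 2*k+1 then a else qv x u w m n (j.val - 1)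

/-- From any point `a` of a closed rectangle `R` with side lengths `m ≤ n` there is a
polygonal path starting and ending at `a`, of length at most `5 n · max m 2`, which passes
within distance 1 of every point of `R`. -/
theorem rectangleScan (R : Set Pt) (m n : ℝ) (hm : 0 < m) (hmn : m ≤ n)
    (hR : IsRectangle R m n) (a : Pt) (ha : a ∈ R) :
    ∃ (N : ℕ) (v : Fin (N + 1) → Pt), v 0 = a ∧ v (Fin.last N) = a ∧
      (∀ q ∈ R, ∃ y ∈ polySet v, dist q y ≤ 1) ∧
      polyLength v ≤ 5 * n * max m 2 := by
  obtain ⟨x, u, w, hu, hw, huw, hRdef⟩ := hR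
  have hn : 0 < n := lt_of_lt_of_le hm hmn
  set k := ⌈m/2⌉₊ with hkdef
  have hk1 : 1 ≤ k := Nat.one_le_ceil_iff.2 (by positivity)
  have hmk : m ≤ 2*k := by
    have := Nat.le_ceil (m/2); rw [← hkdef] at this; linarith
  have hkm : (k:ℝ) < m/2 + 1 := by
    have := Nat.ceil_lt_add_one (show (0:ℝ) ≤ m/2 by positivity)
    rw [← hkdef] at this; exact this
  -- all vertices lie in R
  have hqvR : ∀ j : ℕ, qv x u w m n j ∈ R := by
    intro j
    rw [hRdef]
    refine ⟨sigma' m (j/2), eps' n ((j+1)/2), ⟨le_min (by positivity) hm.le, min_le_right _ _⟩,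
      ?_, rfl⟩
    unfold eps'
    split <;> constructor <;> first | rfl | exact hn.le
  have hvR : ∀ j : Fin (2*k+1+1), vtx x u w m n k a j ∈ R := by
    intro j
    unfold vtx
    split
    · exact ha
    · exact hqvR _
  -- distance between any two points of R is at most 2n
  have hRd : ∀ p ∈ R, ∀ p' ∈ R, dist p p' ≤ 2*n := by
    intro p hp p' hp'
    rw [hRdef] at hp hp'
    obtain ⟨s, t, hs, ht, rfl⟩ := hp
    obtain ⟨s', t', hs', ht', rfl⟩ := hp'
    have h1 : (x + s•u + t•w) - (x + s'•u + t'•w) = (s - s')•u + (t - t')•w := by module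
    rw [dist_eq_norm, h1]
    calc ‖(s - s')•u + (t - t')•w‖ ≤ ‖(s - s')•u‖ + ‖(t - t')•w‖ := norm_add_le _ _
      _ = |s - s'| + |t - t'| := by
          rw [norm_smul, norm_smul, hu, hw, mul_one, mul_one, Real.norm_eq_abs,
            Real.norm_eq_abs]
      _ ≤ m + n := by
          gcongr
          · rw [abs_sub_le_iff]
            exact ⟨by linarith [hs.1, hs.2, hs'.1, hs'.2], by linarith [hs.1, hs.2, hs'.1, hs'.2]⟩
          · rw [abs_sub_le_iff]
            exact ⟨by linarith [ht.1, ht.2, ht'.1, ht'.2], by linarith [ht.1, ht.2, ht'.1, ht'.2]⟩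
      _ ≤ 2*n := by linarith
  -- segment membership lemma
  have hseg : ∀ (A : Pt) (t : ℝ), 0 ≤ t → t ≤ n → A + t • w ∈ segment ℝ A (A + n • w) := by
    intro A t ht0 ht1
    rw [segment_eq_image']
    refine ⟨t/n, ⟨div_nonneg ht0 hn.le, by rw [div_le_one hn]; exact ht1⟩, ?_⟩
    show A + (t/n) • ((A + n • w) - A) = A + t • w
    rw [add_sub_cancel_left, smul_smul, div_mul_cancel₀ _ hn.ne']
  refine ⟨2*k+1, vtx x u w m n k a, ?_, ?_, ?_, ?_⟩
  · simp [vtx]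
  · simp [vtx, Fin.last]
  · -- coverage
    intro p hp
    rw [hRdef] at hp
    obtain ⟨s, t, hs, ht, rfl⟩ := hp
    set i := min (⌊s/2⌋₊) (k-1) with hidef
    have hf1 : s/2 < (⌊s/2⌋₊ : ℝ) + 1 := Nat.lt_floor_add_one _
    have hf2 : (⌊s/2⌋₊:ℝ) ≤ s/2 := Nat.floor_le (by linarith [hs.1])
    -- key inequalities: 2i ≤ s ≤ 2i+2 and i+1 ≤ k
    have hik : i + 1 ≤ k := by omega
    have h2i : (2*(i:ℝ)) ≤ s := by
      have : (i:ℝ) ≤ (⌊s/2⌋₊:ℝ) := by exact_mod_cast Nat.cast_le.2 (min_le_left _ _)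
      linarith
    have hs2 : s ≤ 2*(i:ℝ) + 2 := by
      rcases min_cases (⌊s/2⌋₊) (k-1) with ⟨hieq, hile⟩ | ⟨hieq, hile⟩
      · rw [hidef, hieq]; linarith
      · have h1 : ((i:ℝ)) = (k:ℝ) - 1 := by
          rw [hidef, hieq]
          have : ((k-1:ℕ):ℝ) = (k:ℝ) - 1 := by
            push_cast [Nat.cast_sub hk1]; ring
          rw [this]
        rw [h1]
        push_cast at hmk ⊢
        linarith [hs.2]
    -- |s - sigma' m i| ≤ 1
    have hcov : |s - sigma' m i| ≤ 1 := by
      unfold sigma'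
      rcases le_total (2*(i:ℝ)+1) m with h | h
      · rw [min_eq_left h, abs_sub_le_iff]
        exact ⟨by linarith, by linarith⟩
      · rw [min_eq_right h, abs_sub_le_iff]
        exact ⟨by linarith [hs.2], by linarith⟩
    -- the scan segment for strip i
    have hlt : 2*i+1 < 2*k+1 := by omega
    have e1 : (2*i)/2 = i := by omega
    have e2 : (2*i+1)/2 = i := by omega
    have e3 : (2*i+1+1)/2 = i+1 := by omega
    have hq1 : qv x u w m n (2*i) = x + sigma' m i • u + eps' n i • w := by
      unfold qv; rw [e1, e2]
    have hq2 : qv x u w m n (2*i+1) = x + sigma' m i • u + eps' n (i+1) • w := by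
      unfold qv; rw [e2, e3]
    have hv1 : vtx x u w m n k a (Fin.castSucc ⟨2*i+1, hlt⟩) = qv x u w m n (2*i) := by
      unfold vtx
      rw [if_neg (by simp only [Fin.coe_castSucc]; omega)]
      congr 1
    have hv2 : vtx x u w m n k a (Fin.succ ⟨2*i+1, hlt⟩) = qv x u w m n (2*i+1) := by
      unfold vtx
      rw [if_neg (by simp only [Fin.val_succ]; omega)]
      congr 1
    refine ⟨x + sigma' m i • u + t • w, ?_, ?_⟩
    · rw [polySet, Set.mem_iUnion]
      refine ⟨⟨2*i+1, hlt⟩, ?_⟩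
      rw [hv1, hv2, hq1, hq2]
      rcases Nat.even_or_odd i with hpar | hpar
      · have ei : eps' n i = 0 := if_pos hpar
        have ei1 : eps' n (i+1) = n := if_neg (by simpa using Nat.even_add_one.not.2 (by simpa using hpar))
        rw [ei, ei1, zero_smul, add_zero]
        exact hseg _ t ht.1 ht.2
      · have ei : eps' n i = n := if_neg (Nat.not_even_iff_odd.2 hpar)
        have ei1 : eps' n (i+1) = 0 := if_pos (Nat.even_add_one.2 (Nat.not_even_iff_odd.2 hpar))
        rw [ei, ei1, zero_smul, add_zero, segment_symm]
        exact hseg _ t ht.1 ht.2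
    · have hdiff : (x + s•u + t•w) - (x + sigma' m i • u + t•w) = (s - sigma' m i) • u := by
        module
      rw [dist_eq_norm, hdiff, norm_smul, hu, mul_one, Real.norm_eq_abs]
      exact hcov
  · -- length bound
    have hsum : polyLength (vtx x u w m n k a) ≤ ((2*k+1 : ℕ) : ℝ) * (2*n) := by
      rw [polyLength]
      calc ∑ i : Fin (2*k+1), dist (vtx x u w m n k a i.castSucc) (vtx x u w m n k a i.succ)
          ≤ ∑ _i : Fin (2*k+1), 2*n :=
            Finset.sum_le_sum fun i _ => hRd _ (hvR _) _ (hvR _)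
        _ = ((2*k+1 : ℕ):ℝ) * (2*n) := by
            rw [Finset.sum_const, Finset.card_univ, Fintype.card_fin, nsmul_eq_mul]
    refine hsum.trans ?_
    have hM1 : m ≤ max m 2 := le_max_left _ _
    have hM2 : (2:ℝ) ≤ max m 2 := le_max_right _ _
    have h1 : ((2*k+1 : ℕ):ℝ) * (2*n) = (4*(k:ℝ)+2) * n := by push_cast; ring
    rw [h1]
    nlinarith [hn.le, mul_le_mul_of_nonneg_right (show (4*(k:ℝ)+2) ≤ 5 * max m 2 by nlinarith) hn.le]
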